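/- Define μ₂(x,y) = BCH(x, (1/2)·BCH(-x,y)) in the completed free Lie algebra on x, y. Then μ₂ is symmetric: μ₂(x,y) = μ₂(y,x). -/

import Mathlib

/-- Noncommutative formal power series in `n` variables over `ℚ`:
the completed free associative algebra, given by coefficient functions on words. -/
abbrev NC (n : ℕ) := List (Fin n) → ℚ

namespace NC
variable {n : ℕ}

/-- Pointwise addition. -/
def add (f g : NC n) : NC n := fun w => f w + g w

/-- Pointwise negation. -/
def neg (f : NC n) : NC n := fun w => - f w

/-- Pointwise subtraction. -/
def sub (f g : NC n) : NC n := fun w => f w - g w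

/-- Scalar multiplication. -/
def smul (q : ℚ) (f : NC n) : NC n := fun w => q * f w

/-- The zero series. -/
def zero : NC n := fun _ => 0

/-- The unit series. -/
def one : NC n := fun w => if w = [] then 1 else 0

/-- The `i`-th generator (noncommuting indeterminate). -/
def X (i : Fin n) : NC n := fun w => if w = [i] then 1 else 0

/-- The Cauchy (concatenation) product of noncommutative series. -/
def mul (f g : NC n) : NC n :=
  fun w => ∑ k ∈ Finset.range (w.length + 1), f (w.take k) * g (w.drop k)

/-- Powers. -/
def pow (f : NC n) : ℕ → NC n
  | 0 => one
  | k + 1 => mul f (pow f k)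

/-- The Lie bracket `[f,g] = fg - gf`. -/
def br (f g : NC n) : NC n := sub (mul f g) (mul g f)

/-- The formal exponential; for a series with zero constant term all but finitely
many terms contribute to each coefficient, so this truncated sum is exact. -/
def exp (f : NC n) : NC n :=
  fun w => ∑ k ∈ Finset.range (w.length + 1), (k.factorial : ℚ)⁻¹ * pow f k w

/-- The formal logarithm; exact on series with constant term `1`. -/
def log (g : NC n) : NC n :=
  fun w => ∑ k ∈ Finset.range (w.length + 1),
    (-1 : ℚ) ^ (k + 1) * (k : ℚ)⁻¹ * pow (sub g one) k w

/-- The Baker–Campbell–Hausdorff series: the unique formal series with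
`exp f * exp g = exp (bch f g)`. -/
def bch (f g : NC n) : NC n := log (mul (exp f) (exp g))

/-- `μ₂(x,y) = BCH(x, ½·BCH(-x,y))`. -/
def mu2 (f g : NC n) : NC n := bch f (smul (1/2) (bch (neg f) g))

/-- Iterated (multi-argument) BCH: `BCH(x₁,…,xₙ) = BCH(x₁, BCH(x₂,…,xₙ))`. -/
def bchList : List (NC n) → NC n
  | [] => zero
  | f :: l => bch f (bchList l)

/-- Truncation: projection onto the span of words of length `≤ d`
(Lie monomials with at most `d - 1` brackets). -/
def trunc (d : ℕ) (f : NC n) : NC n :=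
  fun w => if w.length ≤ d then f w else 0

/-- `exp(ad_f)` applied to `g`, i.e. `Σ_k ad_f^k(g)/k!`; for `f` with zero constant
term all but finitely many terms contribute to each coefficient. -/
def expAd (f g : NC n) : NC n :=
  fun w => ∑ k ∈ Finset.range (w.length + 1),
    (k.factorial : ℚ)⁻¹ * ((fun z => br f z)^[k] g) w

end NC

namespace NC

section
open Finset PowerSeries
variable {n : ℕ}

theorem mul_def (f g : NC n) (w : List (Fin n)) :
    mul f g w = ∑ k ∈ Finset.range (w.length + 1), f (w.take k) * g (w.drop k) := rfl

theorem sum_tri' {M : Type*} [AddCommMonoid M] (N : ℕ) (F : ℕ → ℕ → M) :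
    ∑ k ∈ range (N + 1), ∑ j ∈ range (k + 1), F j (k - j)
      = ∑ j ∈ range (N + 1), ∑ i ∈ range (N - j + 1), F j i := by
  rw [Finset.sum_sigma', Finset.sum_sigma']
  apply Finset.sum_nbij' (i := fun p => (⟨p.2, p.1 - p.2⟩ : Σ _ : ℕ, ℕ))
    (j := fun p => (⟨p.1 + p.2, p.1⟩ : Σ _ : ℕ, ℕ))
  · rintro ⟨k, j⟩ hp
    simp only [Finset.mem_sigma, Finset.mem_range] at hp ⊢
    omega
  · rintro ⟨j, i⟩ hp
    simp only [Finset.mem_sigma, Finset.mem_range] at hp ⊢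
    omega
  · rintro ⟨k, j⟩ hp
    simp only [Finset.mem_sigma, Finset.mem_range] at hp
    simp only [Sigma.mk.inj_iff, heq_eq_eq, and_true, true_and]
    omega
  · rintro ⟨j, i⟩ hp
    simp only [Finset.mem_sigma, Finset.mem_range] at hp
    simp only [Sigma.mk.inj_iff, heq_eq_eq, and_true, true_and]
    omega
  · rintro ⟨k, j⟩ hp; rfl

theorem mul_assoc' (f g h : NC n) : mul (mul f g) h = mul f (mul g h) := by
  funext w
  rw [mul_def, mul_def]
  have L : ∀ k ∈ Finset.range (w.length + 1), mul f g (w.take k) * h (w.drop k)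
      = ∑ j ∈ Finset.range (k + 1),
          f (w.take j) * g ((w.drop j).take (k - j)) * h (w.drop (j + (k - j))) := by
    intro k hk
    rw [Finset.mem_range, Nat.lt_succ_iff] at hk
    rw [mul_def, Finset.sum_mul]
    have hlen : (w.take k).length = k := by rw [List.length_take]; omega
    rw [hlen]
    refine Finset.sum_congr rfl ?_
    intro j hj
    rw [Finset.mem_range, Nat.lt_succ_iff] at hj
    have e1 : j + (k - j) = k := by omega
    rw [e1, List.take_take, Nat.min_eq_left hj, List.drop_take]
  have R : ∀ j ∈ Finset.range (w.length + 1), f (w.take j) * mul g h (w.drop j)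
      = ∑ i ∈ Finset.range (w.length - j + 1),
          f (w.take j) * g ((w.drop j).take i) * h (w.drop (j + i)) := by
    intro j hj
    rw [Finset.mem_range, Nat.lt_succ_iff] at hj
    rw [mul_def, Finset.mul_sum, List.length_drop]
    refine Finset.sum_congr rfl ?_
    intro i hi
    rw [List.drop_drop, mul_assoc]
  rw [Finset.sum_congr rfl L, Finset.sum_congr rfl R]
  exact sum_tri' w.length fun j i => f (w.take j) * g ((w.drop j).take i) * h (w.drop (j + i))


end

section
open Finset PowerSeries
variable {n : ℕ}

theorem one_mul' (f : NC n) : mul one f = f := by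
  funext w
  rw [mul_def, Finset.sum_eq_single 0]
  · simp [one]
  · intro k hk hk0
    rw [Finset.mem_range, Nat.lt_succ_iff] at hk
    have : w.take k ≠ [] := by
      rw [ne_eq, List.take_eq_nil_iff]
      push_neg
      refine ⟨hk0, ?_⟩
      intro h
      subst h
      simp at hk
      omega
    simp [one, this]
  · intro h; exact absurd (Finset.mem_range.mpr (Nat.succ_pos _)) h

theorem mul_one' (f : NC n) : mul f one = f := by
  funext w
  rw [mul_def, Finset.sum_eq_single w.length]
  · simp [one]
  · intro k hk hk0
    rw [Finset.mem_range, Nat.lt_succ_iff] at hk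
    have : w.drop k ≠ [] := by
      rw [ne_eq, List.drop_eq_nil_iff]
      omega
    simp [one, this]
  · intro h; exact absurd (Finset.mem_range.mpr (Nat.lt_succ_self _)) h

theorem pow_add' (u : NC n) (a b : ℕ) : pow u (a + b) = mul (pow u a) (pow u b) := by
  induction a with
  | zero => rw [Nat.zero_add]; exact (one_mul' _).symm
  | succ a ih =>
      have e : a + 1 + b = (a + b) + 1 := by omega
      rw [e]
      show mul u (pow u (a + b)) = _
      rw [ih, ← mul_assoc']
      rfl

theorem pow_eq_zero_of (u : NC n) (hu : u [] = 0) :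
    ∀ (k : ℕ) (w : List (Fin n)), w.length < k → pow u k w = 0 := by
  intro k
  induction k with
  | zero => intro w hw; omega
  | succ k ih =>
      intro w hw
      show mul u (pow u k) w = 0
      rw [mul_def]
      apply Finset.sum_eq_zero
      intro j hj
      rw [Finset.mem_range, Nat.lt_succ_iff] at hj
      rcases Nat.eq_zero_or_pos j with h0 | h0
      · subst h0; simp [hu]
      · have : (w.drop j).length < k := by rw [List.length_drop]; omega
        rw [ih _ this, mul_zero]

/-- Evaluation of a one-variable coefficient sequence at `u`. -/
def ev (c : ℕ → ℚ) (u : NC n) : NC n :=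
  fun w => ∑ k ∈ Finset.range (w.length + 1), c k * pow u k w

theorem ev_eq_sum (u : NC n) (hu : u [] = 0) (c : ℕ → ℚ) (N : ℕ) (w : List (Fin n))
    (hN : w.length < N) : ev c u w = ∑ k ∈ Finset.range N, c k * pow u k w := by
  rw [ev]
  apply Finset.sum_subset (Finset.range_subset_range.mpr (by omega))
  intro k hk hk'
  rw [Finset.mem_range] at hk'
  rw [pow_eq_zero_of u hu k w (by omega), mul_zero]

theorem exp_eq_ev (f : NC n) : exp f = ev (fun k => (k.factorial : ℚ)⁻¹) f := rfl

theorem log_eq_ev (g : NC n) :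
    log g = ev (fun k => (-1 : ℚ) ^ (k + 1) * (k : ℚ)⁻¹) (sub g one) := rfl

/-- Convolution of coefficient sequences. -/
def conv (c d : ℕ → ℚ) : ℕ → ℚ := fun m => ∑ a ∈ Finset.range (m + 1), c a * d (m - a)

theorem ev_mul (u : NC n) (hu : u [] = 0) (c d : ℕ → ℚ) :
    mul (ev c u) (ev d u) = ev (conv c d) u := by
  funext w
  set N := w.length with hN
  calc mul (ev c u) (ev d u) w
      = ∑ k ∈ range (N + 1), (∑ a ∈ range (N + 1), c a * pow u a (w.take k)) *
          (∑ b ∈ range (N + 1), d b * pow u b (w.drop k)) := by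
        rw [mul_def]
        refine Finset.sum_congr rfl fun k hk => ?_
        rw [Finset.mem_range, Nat.lt_succ_iff] at hk
        rw [ev_eq_sum u hu c (N + 1) _ (by rw [List.length_take]; omega),
            ev_eq_sum u hu d (N + 1) _ (by rw [List.length_drop]; omega)]
    _ = ∑ a ∈ range (N + 1), ∑ b ∈ range (N + 1), c a * d b *
          ∑ k ∈ range (N + 1), pow u a (w.take k) * pow u b (w.drop k) := by
        have e1 : ∀ k, (∑ a ∈ range (N + 1), c a * pow u a (w.take k)) *
            (∑ b ∈ range (N + 1), d b * pow u b (w.drop k))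
            = ∑ a ∈ range (N + 1), ∑ b ∈ range (N + 1),
                (c a * d b) * (pow u a (w.take k) * pow u b (w.drop k)) := by
          intro k
          rw [Finset.sum_mul_sum]
          exact Finset.sum_congr rfl fun a _ => Finset.sum_congr rfl fun b _ => by ring
        rw [Finset.sum_congr rfl fun k _ => e1 k]
        rw [Finset.sum_comm]
        refine Finset.sum_congr rfl fun a _ => ?_
        rw [Finset.sum_comm]
        refine Finset.sum_congr rfl fun b _ => ?_
        rw [Finset.mul_sum]
    _ = ∑ a ∈ range (N + 1), ∑ b ∈ range (N + 1), c a * d b * pow u (a + b) w := by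
        refine Finset.sum_congr rfl fun a _ => Finset.sum_congr rfl fun b _ => ?_
        rw [pow_add', mul_def]
    _ = ∑ a ∈ range (N + 1), ∑ b ∈ range (N - a + 1), c a * d b * pow u (a + b) w := by
        refine Finset.sum_congr rfl fun a ha => ?_
        rw [Finset.mem_range, Nat.lt_succ_iff] at ha
        symm
        apply Finset.sum_subset (Finset.range_subset_range.mpr (by omega))
        intro b hb hb'
        rw [Finset.mem_range] at hb'
        rw [pow_eq_zero_of u hu _ _ (by omega), mul_zero]
    _ = ∑ m ∈ range (N + 1), ∑ a ∈ range (m + 1), c a * d (m - a) * pow u (a + (m - a)) w :=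
        (sum_tri' N fun a b => c a * d b * pow u (a + b) w).symm
    _ = ev (conv c d) u w := by
        rw [ev, ← hN]
        refine Finset.sum_congr rfl fun m hm => ?_
        rw [conv, Finset.sum_mul]
        refine Finset.sum_congr rfl fun a ha => ?_
        rw [Finset.mem_range, Nat.lt_succ_iff] at ha
        rw [Nat.add_sub_cancel' ha]


end

section
open Finset PowerSeries
variable {n : ℕ}

/-- Convolution powers of a sequence. -/
def convPow (c : ℕ → ℚ) : ℕ → ℕ → ℚ
  | 0 => fun m => if m = 0 then 1 else 0
  | k + 1 => conv c (convPow c k)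

theorem ev_delta (u : NC n) : ev (fun m => if m = 0 then (1 : ℚ) else 0) u = one := by
  funext w
  rw [ev, Finset.sum_eq_single 0]
  · simp [pow]
  · intro k _ hk0; simp [hk0]
  · intro h; exact absurd (Finset.mem_range.mpr (Nat.succ_pos _)) h

theorem ev_pow (u : NC n) (hu : u [] = 0) (c : ℕ → ℚ) (m : ℕ) :
    pow (ev c u) m = ev (convPow c m) u := by
  induction m with
  | zero => exact (ev_delta u).symm
  | succ m ih =>
      show mul (ev c u) (pow (ev c u) m) = _
      rw [ih, ev_mul u hu]
      rfl

theorem convPow_eq_zero (c : ℕ → ℚ) (hc : c 0 = 0) :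
    ∀ (m k : ℕ), k < m → convPow c m k = 0 := by
  intro m
  induction m with
  | zero => intro k hk; omega
  | succ m ih =>
      intro k hk
      show conv c (convPow c m) k = 0
      rw [conv]
      apply Finset.sum_eq_zero
      intro a ha
      rw [Finset.mem_range, Nat.lt_succ_iff] at ha
      rcases Nat.eq_zero_or_pos a with h0 | h0
      · subst h0; rw [hc, zero_mul]
      · rw [ih (k - a) (by omega), mul_zero]

/-- Composition of coefficient sequences. -/
def comp (d c : ℕ → ℚ) : ℕ → ℚ := fun k => ∑ m ∈ Finset.range (k + 1), d m * convPow c m k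

theorem ev_ev (u : NC n) (hu : u [] = 0) (c : ℕ → ℚ) (hc : c 0 = 0) (d : ℕ → ℚ) :
    ev d (ev c u) = ev (comp d c) u := by
  funext w
  set N := w.length with hN
  calc ev d (ev c u) w
      = ∑ m ∈ range (N + 1), d m * ev (convPow c m) u w := by
        rw [ev]
        exact Finset.sum_congr rfl fun m _ => by rw [ev_pow u hu]
    _ = ∑ m ∈ range (N + 1), ∑ k ∈ range (N + 1), d m * convPow c m k * pow u k w := by
        refine Finset.sum_congr rfl fun m _ => ?_
        rw [ev, Finset.mul_sum]
        exact Finset.sum_congr rfl fun k _ => by ring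
    _ = ∑ k ∈ range (N + 1), (∑ m ∈ range (N + 1), d m * convPow c m k) * pow u k w := by
        rw [Finset.sum_comm]
        exact Finset.sum_congr rfl fun k _ => by rw [Finset.sum_mul]
    _ = ev (comp d c) u w := by
        rw [ev, ← hN]
        refine Finset.sum_congr rfl fun k hk => ?_
        rw [Finset.mem_range, Nat.lt_succ_iff] at hk
        rw [comp]
        congr 1
        symm
        apply Finset.sum_subset (Finset.range_subset_range.mpr (by omega))
        intro m hm hm'
        rw [Finset.mem_range] at hm'
        rw [convPow_eq_zero c hc m k (by omega), mul_zero]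


end

section
open Finset PowerSeries
variable {n : ℕ}

/-- exp coefficients. -/
def Ec : ℕ → ℚ := fun k => (k.factorial : ℚ)⁻¹
/-- log coefficients. -/
def Lc : ℕ → ℚ := fun k => (-1 : ℚ) ^ (k + 1) * (k : ℚ)⁻¹

theorem Lc_zero : Lc 0 = 0 := by simp [Lc]

theorem conv_coeff (c d : ℕ → ℚ) (k : ℕ) :
    conv c d k = PowerSeries.coeff k (PowerSeries.mk c * PowerSeries.mk d) := by
  rw [PowerSeries.coeff_mul, Finset.Nat.sum_antidiagonal_eq_sum_range_succ_mk, conv]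
  exact Finset.sum_congr rfl fun a ha => by rw [PowerSeries.coeff_mk, PowerSeries.coeff_mk]

theorem convPow_coeff (c : ℕ → ℚ) (m k : ℕ) :
    convPow c m k = PowerSeries.coeff k ((PowerSeries.mk c) ^ m) := by
  induction m generalizing k with
  | zero => rw [pow_zero, PowerSeries.coeff_one]; rfl
  | succ m ih =>
      have hmk : PowerSeries.mk (convPow c m) = (PowerSeries.mk c) ^ m :=
        PowerSeries.ext fun j => by rw [PowerSeries.coeff_mk, ih]
      show conv c (convPow c m) k = _
      rw [conv_coeff, hmk, ← pow_succ']

/-- The log power series. -/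
noncomputable def LP : PowerSeries ℚ := PowerSeries.mk Lc
/-- The composite `exp ∘ log` coefficients. -/
noncomputable def cEL : ℕ → ℚ := comp Ec Lc
/-- Its generating series. -/
noncomputable def AEL : PowerSeries ℚ := PowerSeries.mk cEL

theorem cEL_eq (k : ℕ) :
    cEL k = ∑ m ∈ range (k + 1), Ec m * PowerSeries.coeff k (LP ^ m) := by
  rw [cEL, comp]
  exact Finset.sum_congr rfl fun m _ => by rw [convPow_coeff]; rfl

theorem coeff_LP_pow_eq_zero {m k : ℕ} (h : k < m) : PowerSeries.coeff k (LP ^ m) = 0 := by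
  rw [LP, ← convPow_coeff]
  exact convPow_eq_zero Lc Lc_zero m k h

theorem cEL_eq' {k N : ℕ} (h : k < N) :
    cEL k = ∑ m ∈ range N, Ec m * PowerSeries.coeff k (LP ^ m) := by
  rw [cEL_eq]
  apply Finset.sum_subset (Finset.range_subset_range.mpr (by omega))
  intro m hm hm'
  rw [Finset.mem_range] at hm'
  rw [coeff_LP_pow_eq_zero (by omega), mul_zero]

theorem hL_ode : (1 + PowerSeries.X) * (d⁄dX ℚ LP) = 1 := by
  ext k
  rw [add_mul, one_mul, map_add]
  cases k with
  | zero =>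
      rw [PowerSeries.coeff_zero_X_mul, PowerSeries.coeff_derivative, PowerSeries.coeff_one]
      simp [LP, Lc]
  | succ j =>
      rw [PowerSeries.coeff_succ_X_mul, PowerSeries.coeff_derivative,
        PowerSeries.coeff_derivative, PowerSeries.coeff_one]
      simp only [LP, PowerSeries.coeff_mk, Lc]
      have h1 : ((j : ℚ) + 1) ≠ 0 := by positivity
      have h2 : ((j : ℚ) + 1 + 1) ≠ 0 := by positivity
      push_cast
      field_simp
      ring

end

section
open Finset PowerSeries
variable {n : ℕ}

theorem fact_step (m : ℕ) : Ec (m + 1) * ((m : ℚ) + 1) = Ec m := by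
  rw [Ec, Ec, Nat.factorial_succ]
  have h1 : (m.factorial : ℚ) ≠ 0 := Nat.cast_ne_zero.mpr m.factorial_ne_zero
  have h2 : ((m : ℚ) + 1) ≠ 0 := by positivity
  push_cast
  field_simp

theorem hA_ode : d⁄dX ℚ AEL = AEL * d⁄dX ℚ LP := by
  ext k
  calc PowerSeries.coeff k (d⁄dX ℚ AEL)
      = cEL (k + 1) * ((k : ℚ) + 1) := by
        rw [PowerSeries.coeff_derivative, AEL, PowerSeries.coeff_mk]
    _ = ∑ m ∈ range (k + 1), Ec m * PowerSeries.coeff k (LP ^ m * d⁄dX ℚ LP) := by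
        rw [cEL_eq, Finset.sum_mul, Finset.sum_range_succ']
        have h0 : Ec 0 * PowerSeries.coeff (k + 1) (LP ^ 0) * ((k : ℚ) + 1) = 0 := by
          rw [pow_zero, PowerSeries.coeff_one]
          simp
        rw [h0, add_zero]
        refine Finset.sum_congr rfl fun m hm => ?_
        have hd : PowerSeries.coeff (k + 1) (LP ^ (m + 1)) * ((k : ℚ) + 1)
            = PowerSeries.coeff k (d⁄dX ℚ (LP ^ (m + 1))) := by
          rw [PowerSeries.coeff_derivative]
        calc Ec (m + 1) * PowerSeries.coeff (k + 1) (LP ^ (m + 1)) * ((k : ℚ) + 1)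
            = Ec (m + 1) * (PowerSeries.coeff (k + 1) (LP ^ (m + 1)) * ((k : ℚ) + 1)) := by
              ring
          _ = Ec (m + 1) * PowerSeries.coeff k (d⁄dX ℚ (LP ^ (m + 1))) := by rw [hd]
          _ = Ec (m + 1) * (((m : ℚ) + 1) * PowerSeries.coeff k (LP ^ m * d⁄dX ℚ LP)) := by
              rw [Derivation.leibniz_pow, Nat.add_sub_cancel, smul_eq_mul, map_nsmul,
                nsmul_eq_mul]
              push_cast
              ring
          _ = Ec m * PowerSeries.coeff k (LP ^ m * d⁄dX ℚ LP) := by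
              rw [← fact_step m]; ring
    _ = PowerSeries.coeff k (AEL * d⁄dX ℚ LP) := by
        rw [PowerSeries.coeff_mul, Finset.Nat.sum_antidiagonal_eq_sum_range_succ_mk]
        calc ∑ m ∈ range (k + 1), Ec m * PowerSeries.coeff k (LP ^ m * d⁄dX ℚ LP)
            = ∑ m ∈ range (k + 1), ∑ i ∈ range (k + 1),
                (Ec m * PowerSeries.coeff i (LP ^ m)) * PowerSeries.coeff (k - i) (d⁄dX ℚ LP) := by
              refine Finset.sum_congr rfl fun m _ => ?_
              rw [PowerSeries.coeff_mul, Finset.Nat.sum_antidiagonal_eq_sum_range_succ_mk,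
                Finset.mul_sum]
              exact Finset.sum_congr rfl fun i _ => by ring
          _ = ∑ i ∈ range (k + 1), (∑ m ∈ range (k + 1), Ec m * PowerSeries.coeff i (LP ^ m)) *
                PowerSeries.coeff (k - i) (d⁄dX ℚ LP) := by
              rw [Finset.sum_comm]
              exact Finset.sum_congr rfl fun i _ => by rw [Finset.sum_mul]
          _ = ∑ i ∈ range (k + 1), PowerSeries.coeff i AEL *
                PowerSeries.coeff (k - i) (d⁄dX ℚ LP) := by
              refine Finset.sum_congr rfl fun i hi => ?_
              rw [Finset.mem_range] at hi
              rw [AEL, PowerSeries.coeff_mk, cEL_eq' hi]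

theorem hA_full : (1 + PowerSeries.X) * d⁄dX ℚ AEL = AEL := by
  rw [hA_ode, mul_left_comm, hL_ode, mul_one]

theorem cEL_rec (j : ℕ) :
    cEL (j + 2) * ((j : ℚ) + 2) + cEL (j + 1) * ((j : ℚ) + 1) = cEL (j + 1) := by
  have h := congrArg (PowerSeries.coeff (j + 1)) hA_full
  rw [add_mul, one_mul, map_add, PowerSeries.coeff_succ_X_mul, PowerSeries.coeff_derivative,
    PowerSeries.coeff_derivative, AEL, PowerSeries.coeff_mk, PowerSeries.coeff_mk] at h
  push_cast at h ⊢
  linarith [h]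

theorem cEL_zero : cEL 0 = 1 := by
  simp [cEL, comp, convPow, Ec]

theorem cEL_one : cEL 1 = 1 := by
  simp [cEL, comp, convPow, conv, Ec, Lc, Finset.sum_range_succ]

theorem cEL_ge_two : ∀ i : ℕ, cEL (i + 2) = 0 := by
  intro i
  induction i with
  | zero =>
      have h := cEL_rec 0
      push_cast at h
      linarith [h]
  | succ i ih =>
      have h := cEL_rec (i + 1)
      have e : i + 1 + 2 = i + 3 := by omega
      rw [show i + 1 + 1 = i + 2 from rfl, ih] at h
      push_cast at h
      have h3 : ((i : ℚ) + 1 + 2) ≠ 0 := by positivity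
      have := h
      nlinarith [h]

theorem comp_Ec_Lc (k : ℕ) :
    comp Ec Lc k = if k = 0 then 1 else if k = 1 then 1 else 0 := by
  match k with
  | 0 => simpa [cEL] using cEL_zero
  | 1 => simpa [cEL] using cEL_one
  | (i + 2) =>
      have := cEL_ge_two i
      simpa [cEL] using this

end

section
open Finset PowerSeries
variable {n : ℕ}


theorem sub_one_nil {g : NC n} (hg : g [] = 1) : sub g one [] = 0 := by
  simp [sub, one, hg]

theorem exp_log {g : NC n} (hg : g [] = 1) : exp (log g) = g := by
  have hu : sub g one [] = 0 := sub_one_nil hg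
  rw [log_eq_ev, exp_eq_ev]
  show ev Ec (ev Lc (sub g one)) = g
  rw [ev_ev (sub g one) hu Lc Lc_zero Ec]
  funext w
  rw [ev_eq_sum (sub g one) hu _ (w.length + 2) w (by omega)]
  have hs : ∀ i : ℕ, comp Ec Lc (i + 2) * pow (sub g one) (i + 2) w = 0 := by
    intro i
    rw [comp_Ec_Lc, if_neg (by omega), if_neg (by omega), zero_mul]
  rw [Finset.sum_range_succ', Finset.sum_range_succ']
  have hz : ∑ i ∈ Finset.range w.length,
      comp Ec Lc (i + 1 + 1) * pow (sub g one) (i + 1 + 1) w = 0 :=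
    Finset.sum_eq_zero fun i _ => hs i
  rw [hz]
  have e0 : comp Ec Lc 0 = 1 := cEL_zero
  have e1 : comp Ec Lc 1 = 1 := cEL_one
  rw [e0, e1, one_mul, one_mul, zero_add]
  have h1 : pow (sub g one) 1 = sub g one := by
    show mul (sub g one) one = sub g one
    exact mul_one' _
  rw [h1]
  show sub g one w + one w = g w
  show g w - one w + one w = g w
  ring

theorem mul_apply_nil (f g : NC n) : mul f g [] = f [] * g [] := by
  rw [mul_def]
  simp

theorem exp_apply_nil (f : NC n) : exp f [] = 1 := by
  show ∑ k ∈ Finset.range 1, (k.factorial : ℚ)⁻¹ * pow f k [] = 1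
  simp [pow, one]

theorem log_apply_nil (g : NC n) : log g [] = 0 := by
  show ∑ k ∈ Finset.range 1, (-1 : ℚ) ^ (k + 1) * (k : ℚ)⁻¹ * pow (sub g one) k [] = 0
  simp

theorem exp_bch (f g : NC n) : mul (exp f) (exp g) = exp (bch f g) := by
  rw [bch]
  refine (exp_log ?_).symm
  rw [mul_apply_nil, exp_apply_nil, exp_apply_nil, mul_one]

theorem mul_smul_smul (a b : ℚ) (f g : NC n) :
    mul (smul a f) (smul b g) = smul (a * b) (mul f g) := by
  funext w
  rw [smul, mul_def, mul_def, Finset.mul_sum]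
  exact Finset.sum_congr rfl fun k _ => by rw [smul, smul]; ring

theorem pow_smul (q : ℚ) (u : NC n) (k : ℕ) :
    pow (smul q u) k = smul (q ^ k) (pow u k) := by
  induction k with
  | zero =>
      show one = smul (q ^ 0) one
      funext w
      simp [smul]
  | succ k ih =>
      show mul (smul q u) (pow (smul q u) k) = _
      rw [ih, mul_smul_smul]
      rw [pow_succ' q k]
      rfl

theorem exp_smul_eq (q : ℚ) (u : NC n) :
    exp (smul q u) = ev (fun k => q ^ k * (k.factorial : ℚ)⁻¹) u := by
  rw [exp_eq_ev]
  funext w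
  rw [ev, ev]
  refine Finset.sum_congr rfl fun k _ => ?_
  rw [pow_smul, smul]
  ring

theorem exp_smul_mul (u : NC n) (hu : u [] = 0) (q r : ℚ) :
    mul (exp (smul q u)) (exp (smul r u)) = exp (smul (q + r) u) := by
  rw [exp_smul_eq, exp_smul_eq, exp_smul_eq, ev_mul u hu]
  have hcv : conv (fun k => q ^ k * (k.factorial : ℚ)⁻¹) (fun k => r ^ k * (k.factorial : ℚ)⁻¹)
      = fun m => (q + r) ^ m * (m.factorial : ℚ)⁻¹ := by
    funext m
    simp only [conv]
    have key : ((q + r) ^ m) = ∑ a ∈ Finset.range (m + 1), q ^ a * r ^ (m - a) * (m.choose a : ℚ) :=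
    add_pow q r m
    rw [key, Finset.sum_mul]
    refine Finset.sum_congr rfl fun a ha => ?_
    rw [Finset.mem_range, Nat.lt_succ_iff] at ha
    rw [Nat.cast_choose ℚ ha]
    have h1 : (a.factorial : ℚ) ≠ 0 := Nat.cast_ne_zero.mpr a.factorial_ne_zero
    have h2 : ((m - a).factorial : ℚ) ≠ 0 := Nat.cast_ne_zero.mpr (m - a).factorial_ne_zero
    have h3 : (m.factorial : ℚ) ≠ 0 := Nat.cast_ne_zero.mpr m.factorial_ne_zero
    field_simp
  rw [hcv]

theorem smul_one_eq (u : NC n) : smul 1 u = u := by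
  funext w; simp [smul]

theorem neg_eq_smul (u : NC n) : neg u = smul (-1) u := by
  funext w; simp [neg, smul]

theorem exp_smul_zero (u : NC n) : exp (smul 0 u) = one := by
  rw [exp_smul_eq]
  funext w
  rw [ev, Finset.sum_eq_single 0]
  · simp [pow]
  · intro k _ hk0
    rw [zero_pow hk0, zero_mul, zero_mul]
  · intro h; exact absurd (Finset.mem_range.mpr (Nat.succ_pos _)) h

theorem exp_neg_mul (u : NC n) (hu : u [] = 0) : mul (exp (neg u)) (exp u) = one := by
  rw [neg_eq_smul]
  nth_rewrite 2 [← smul_one_eq u]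
  rw [exp_smul_mul u hu]
  norm_num
  exact exp_smul_zero u

theorem exp_mul_neg (u : NC n) (hu : u [] = 0) : mul (exp u) (exp (neg u)) = one := by
  rw [neg_eq_smul]
  nth_rewrite 1 [← smul_one_eq u]
  rw [exp_smul_mul u hu]
  norm_num
  exact exp_smul_zero u

theorem exp_half_sq (u : NC n) (hu : u [] = 0) :
    mul (exp (smul (1/2) u)) (exp (smul (1/2) u)) = exp u := by
  rw [exp_smul_mul u hu]
  norm_num
  rw [smul_one_eq]

end

section
open Finset PowerSeries
variable {n : ℕ}

theorem sq_unique {A B : NC n} (hA : A [] = 1) (hB : B [] = 1)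
    (h : mul A A = mul B B) : A = B := by
  have H : ∀ N : ℕ, ∀ w : List (Fin n), w.length ≤ N → A w = B w := by
    intro N
    induction N with
    | zero =>
        intro w hw
        have hw0 : w = [] := List.length_eq_zero_iff.mp (Nat.le_zero.mp hw)
        subst hw0
        rw [hA, hB]
    | succ N ih =>
        intro w hw
        rcases Nat.lt_or_ge w.length (N + 1) with hlt | hge
        · exact ih w (by omega)
        have hlen : w.length = N + 1 := by omega
        have h2 := congrFun h w
        rw [mul_def, mul_def] at h2
        have key : ∀ k ∈ Finset.range (w.length + 1),
            A (w.take k) * A (w.drop k) - B (w.take k) * B (w.drop k)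
            = (if k = 0 then A w - B w else 0) + (if k = w.length then A w - B w else 0) := by
          intro k hk
          rw [Finset.mem_range, Nat.lt_succ_iff] at hk
          rcases eq_or_ne k 0 with rfl | hk0
          · have hkn : (0 : ℕ) ≠ w.length := by omega
            simp [hA, hB, hkn]
          rcases eq_or_ne k w.length with rfl | hkn
          · simp [List.take_length, List.drop_length, hA, hB, hk0]
          · have l1 : (w.take k).length ≤ N := by rw [List.length_take]; omega
            have l2 : (w.drop k).length ≤ N := by rw [List.length_drop]; omega
            rw [ih _ l1, ih _ l2]
            simp [hk0, hkn]
        have hsum := Finset.sum_congr rfl key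
        rw [Finset.sum_sub_distrib, h2, sub_self, Finset.sum_add_distrib,
          Finset.sum_ite_eq' (Finset.range (w.length + 1)) 0 (fun _ => A w - B w),
          Finset.sum_ite_eq' (Finset.range (w.length + 1)) w.length (fun _ => A w - B w),
          if_pos (Finset.mem_range.mpr (Nat.succ_pos _)),
          if_pos (Finset.mem_range.mpr (Nat.lt_succ_self _))] at hsum
        linarith [hsum.symm]
  funext w
  exact H w.length w le_rfl

theorem mu2_symm_aux : mu2 (X (0 : Fin 2)) (X 1) = mu2 (X 1) (X 0) := by
  let x : NC 2 := X 0
  let y : NC 2 := X 1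
  have hx : x [] = 0 := by simp [x, X]
  have hy : y [] = 0 := by simp [y, X]
  have hc : bch (neg x) y [] = 0 := log_apply_nil _
  have hc' : bch (neg y) x [] = 0 := log_apply_nil _
  set cc := bch (neg x) y with hcc
  set cc' := bch (neg y) x with hcc'
  set s : NC 2 := exp (smul (1/2) cc) with hs
  set s' : NC 2 := exp (smul (1/2) cc') with hs'
  set m : NC 2 := mul (exp x) s with hm
  set m' : NC 2 := mul (exp y) s' with hm'
  have h1 : mul (exp (neg x)) m = s := by
    rw [hm, ← mul_assoc', exp_neg_mul x hx, one_mul']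
  have h2 : mul s s = exp cc := exp_half_sq cc hc
  have h3 : mul m (mul (exp (neg x)) m) = exp y := by
    rw [h1, hm, mul_assoc', h2, hcc, ← exp_bch, ← mul_assoc', exp_mul_neg x hx, one_mul']
  have hsa : mul s (exp (smul (-(1/2)) cc)) = one := by
    rw [hs, exp_smul_mul cc hc]
    norm_num
    exact exp_smul_zero cc
  have has : mul (exp (smul (-(1/2)) cc)) s = one := by
    rw [hs, exp_smul_mul cc hc]
    norm_num
    exact exp_smul_zero cc
  set mi : NC 2 := mul (exp (smul (-(1/2)) cc)) (exp (neg x)) with hmi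
  have h4 : mul mi m = one := by
    rw [hmi, hm, mul_assoc']
    rw [← mul_assoc' (exp (neg x)) (exp x) s, exp_neg_mul x hx, one_mul']
    exact has
  have h5 : mul m mi = one := by
    rw [hmi, hm, mul_assoc']
    rw [← mul_assoc' s (exp (smul (-(1/2)) cc)) (exp (neg x)), hsa, one_mul']
    exact exp_mul_neg x hx
  have cancel₂ : ∀ {f g : NC 2}, mul f g = one → ∀ h : NC 2, mul f (mul g h) = h := by
    intro f g hfg h
    rw [← mul_assoc', hfg, one_mul']
  have h6 : mul (exp y) (mul mi (mul (exp x) mi)) = one := by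
    rw [← h3]
    simp only [mul_assoc']
    rw [cancel₂ h5, cancel₂ (exp_neg_mul x hx)]
    exact h5
  have h7 : exp (neg y) = mul mi (mul (exp x) mi) := by
    calc exp (neg y) = mul (exp (neg y)) one := (mul_one' _).symm
      _ = mul (exp (neg y)) (mul (exp y) (mul mi (mul (exp x) mi))) := by rw [h6]
      _ = mul (mul (exp (neg y)) (exp y)) (mul mi (mul (exp x) mi)) := (mul_assoc' _ _ _).symm
      _ = mul one (mul mi (mul (exp x) mi)) := by rw [exp_neg_mul y hy]
      _ = mul mi (mul (exp x) mi) := one_mul' _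
  have h8 : mul m (mul (exp (neg y)) m) = exp x := by
    rw [h7]
    simp only [mul_assoc']
    rw [cancel₂ h5, h4, mul_one']
  have h9 : mul (mul (exp (neg y)) m) (mul (exp (neg y)) m) = mul (exp (neg y)) (exp x) := by
    rw [mul_assoc', h8]
  have h1' : mul (exp (neg y)) m' = s' := by
    rw [hm', ← mul_assoc', exp_neg_mul y hy, one_mul']
  have h10 : mul (mul (exp (neg y)) m') (mul (exp (neg y)) m') = mul (exp (neg y)) (exp x) := by
    rw [h1', hs', exp_half_sq cc' hc', hcc', ← exp_bch]
  have hmnil : m [] = 1 := by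
    rw [hm, mul_apply_nil, exp_apply_nil, hs, exp_apply_nil, mul_one]
  have hm'nil : m' [] = 1 := by
    rw [hm', mul_apply_nil, exp_apply_nil, hs', exp_apply_nil, mul_one]
  have hSnil : mul (exp (neg y)) m [] = 1 := by
    rw [mul_apply_nil, exp_apply_nil, hmnil, mul_one]
  have hS'nil : mul (exp (neg y)) m' [] = 1 := by
    rw [mul_apply_nil, exp_apply_nil, hm'nil, mul_one]
  have hSS : mul (exp (neg y)) m = mul (exp (neg y)) m' :=
    sq_unique hSnil hS'nil (h9.trans h10.symm)
  have hfin : m = m' := by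
    calc m = mul one m := (one_mul' m).symm
      _ = mul (mul (exp y) (exp (neg y))) m := by rw [exp_mul_neg y hy]
      _ = mul (exp y) (mul (exp (neg y)) m) := mul_assoc' _ _ _
      _ = mul (exp y) (mul (exp (neg y)) m') := by rw [hSS]
      _ = mul (mul (exp y) (exp (neg y))) m' := (mul_assoc' _ _ _).symm
      _ = mul one m' := by rw [exp_mul_neg y hy]
      _ = m' := one_mul' m'
  have hgoal : log m = log m' := congrArg log hfin
  rw [hm, hm', hs, hs', hcc, hcc'] at hgoal
  exact hgoal


end

end NC

/-- `μ₂(x,y) = BCH(x, ½BCH(-x,y))` is symmetric: `μ₂(x,y) = μ₂(y,x)`. -/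
theorem mu2_symm :
    NC.mu2 (NC.X (0 : Fin 2)) (NC.X 1) = NC.mu2 (NC.X 1) (NC.X 0) := by
  exact NC.mu2_symm_aux
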